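/- Let f : ℝ^n → ℝ be locally Lipschitz and x, x' ∈ ℝ^n. Then there exist y on the segment [x, x'] and w in the Clarke generalized gradient ∂f(y) such that f(x') - f(x) = ⟨w, x' - x⟩. -/

import Mathlib

open Filter Topology

/-- Clarke generalized directional derivative of `f` at `x` in direction `v`. -/
noncomputable def clarkeDeriv {n : ℕ} (f : EuclideanSpace ℝ (Fin n) → ℝ)
    (x v : EuclideanSpace ℝ (Fin n)) : ℝ :=
  Filter.limsup (fun p : EuclideanSpace ℝ (Fin n) × ℝ => (f (p.1 + p.2 • v) - f p.1) / p.2)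
    ((𝓝 x) ×ˢ (𝓝[>] (0 : ℝ)))

/-- Clarke generalized gradient of `f` at `x`. -/
def clarkeGradient {n : ℕ} (f : EuclideanSpace ℝ (Fin n) → ℝ) (x : EuclideanSpace ℝ (Fin n)) :
    Set (EuclideanSpace ℝ (Fin n)) :=
  {ζ | ∀ v, (inner ℝ ζ v : ℝ) ≤ clarkeDeriv f x v}

namespace LebourgAux

variable {n : ℕ}

/-- The difference quotient appearing in the Clarke derivative. -/
noncomputable def dq (f : EuclideanSpace ℝ (Fin n) → ℝ) (v : EuclideanSpace ℝ (Fin n))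
    (p : EuclideanSpace ℝ (Fin n) × ℝ) : ℝ :=
  (f (p.1 + p.2 • v) - f p.1) / p.2

lemma clarkeDeriv_eq (f : EuclideanSpace ℝ (Fin n) → ℝ) (x v : EuclideanSpace ℝ (Fin n)) :
    clarkeDeriv f x v = Filter.limsup (dq f v) ((𝓝 x) ×ˢ (𝓝[>] (0 : ℝ))) := rfl

lemma isBoundedUnder_of_abs {α : Type*} {l : Filter α} {g : α → ℝ} {M : ℝ}
    (h : ∀ᶠ x in l, |g x| ≤ M) :
    IsBoundedUnder (· ≤ ·) l g ∧ IsBoundedUnder (· ≥ ·) l g :=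
  ⟨⟨M, eventually_map.2 (h.mono fun _ hx => (abs_le.1 hx).2)⟩,
   ⟨-M, eventually_map.2 (h.mono fun _ hx => (abs_le.1 hx).1)⟩⟩

/-- Near a point, the difference quotients are uniformly bounded by `K * ‖v‖`. -/
lemma exists_bound (f : EuclideanSpace ℝ (Fin n) → ℝ) (hf : LocallyLipschitz f)
    (y : EuclideanSpace ℝ (Fin n)) :
    ∃ K : ℝ, 0 ≤ K ∧ ∀ v, ∀ᶠ p in ((𝓝 y) ×ˢ (𝓝[>] (0 : ℝ))), |dq f v p| ≤ K * ‖v‖ := by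
  obtain ⟨K, t, ht, hK⟩ := hf y
  obtain ⟨ε, hε, hball⟩ := Metric.mem_nhds_iff.1 ht
  refine ⟨K, K.coe_nonneg, fun v => ?_⟩
  have h1 : ∀ᶠ z in 𝓝 y, z ∈ Metric.ball y (ε / 2) :=
    Metric.ball_mem_nhds y (by linarith)
  have h2 : ∀ᶠ s in 𝓝[>] (0 : ℝ), s ∈ Set.Ioo 0 (ε / (2 * (‖v‖ + 1))) :=
    Ioo_mem_nhdsGT_of_mem ⟨le_refl _, by positivity⟩
  filter_upwards [h1.prod_inl (𝓝[>] (0 : ℝ)), h2.prod_inr (𝓝 y)] with p hp1 hp2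
  have hvpos : (0 : ℝ) < ‖v‖ + 1 := by positivity
  have hs0 : (0 : ℝ) < p.2 := hp2.1
  have hsv : p.2 * ‖v‖ < ε / 2 := by
    have h' : p.2 * ‖v‖ ≤ p.2 * (‖v‖ + 1) := by nlinarith
    have h'' : p.2 * (‖v‖ + 1) < ε / 2 := by
      have := hp2.2
      rw [div_mul_eq_div_div] at this
      calc p.2 * (‖v‖ + 1) < ε / 2 / (‖v‖ + 1) * (‖v‖ + 1) := by
            exact mul_lt_mul_of_pos_right this hvpos
        _ = ε / 2 := div_mul_cancel₀ _ hvpos.ne'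
    linarith
  have hz : p.1 ∈ Metric.ball y ε := by
    have := mem_ball_iff_norm.1 hp1
    exact mem_ball_iff_norm.2 (by linarith)
  have hz' : p.1 + p.2 • v ∈ Metric.ball y ε := by
    rw [mem_ball_iff_norm]
    have : p.1 + p.2 • v - y = (p.1 - y) + p.2 • v := by abel
    rw [this]
    have hb := norm_add_le (p.1 - y) (p.2 • v)
    have hsv' : ‖p.2 • v‖ = p.2 * ‖v‖ := by
      rw [norm_smul, Real.norm_eq_abs, abs_of_pos hs0]
    have h1' := mem_ball_iff_norm.1 hp1
    rw [hsv'] at hb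
    linarith
  have hd := hK.dist_le_mul _ (hball hz') _ (hball hz)
  have hdist : dist (p.1 + p.2 • v) p.1 = p.2 * ‖v‖ := by
    rw [dist_eq_norm, add_sub_cancel_left, norm_smul, Real.norm_eq_abs, abs_of_pos hs0]
  rw [Real.dist_eq, hdist] at hd
  have : |dq f v p| = |f (p.1 + p.2 • v) - f p.1| / p.2 := by
    rw [dq, abs_div, abs_of_pos hs0]
  rw [this, div_le_iff₀ hs0]
  calc |f (p.1 + p.2 • v) - f p.1| ≤ K * (p.2 * ‖v‖) := hd
    _ = K * ‖v‖ * p.2 := by ring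

lemma eventually_pos (y : EuclideanSpace ℝ (Fin n)) :
    ∀ᶠ p : EuclideanSpace ℝ (Fin n) × ℝ in ((𝓝 y) ×ˢ (𝓝[>] (0 : ℝ))), 0 < p.2 :=
  (eventually_mem_nhdsWithin : ∀ᶠ s : ℝ in 𝓝[>] (0:ℝ), s ∈ Set.Ioi 0).prod_inr (𝓝 y)

lemma clarkeDeriv_zero (f : EuclideanSpace ℝ (Fin n) → ℝ) (y : EuclideanSpace ℝ (Fin n)) :
    clarkeDeriv f y 0 = 0 := by
  rw [clarkeDeriv_eq]
  have : dq f (0 : EuclideanSpace ℝ (Fin n)) = fun _ => (0 : ℝ) := by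
    funext p; simp [dq]
  rw [this, limsup_const]

lemma tendsto_mul_nhdsGT {c : ℝ} (hc : 0 < c) :
    Filter.Tendsto (fun s : ℝ => c * s) (𝓝[>] (0 : ℝ)) (𝓝[>] (0 : ℝ)) := by
  rw [tendsto_nhdsWithin_iff]
  constructor
  · have hcont : Continuous fun s : ℝ => c * s := continuous_const.mul continuous_id
    have h := hcont.tendsto (0 : ℝ)
    simpa using h.mono_left nhdsWithin_le_nhds
  · filter_upwards [self_mem_nhdsWithin] with s hs
    exact mul_pos hc hs

lemma map_mul_nhdsGT {c : ℝ} (hc : 0 < c) :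
    Filter.map (fun s : ℝ => c * s) (𝓝[>] (0 : ℝ)) = 𝓝[>] (0 : ℝ) := by
  refine le_antisymm (tendsto_mul_nhdsGT hc) ?_
  have key : 𝓝[>] (0 : ℝ)
      = Filter.map (fun s : ℝ => c * s) (Filter.map (fun s : ℝ => c⁻¹ * s) (𝓝[>] (0 : ℝ))) := by
    rw [Filter.map_map]
    have : ((fun s : ℝ => c * s) ∘ fun s : ℝ => c⁻¹ * s) = id := by
      funext s; simp [Function.comp, ← mul_assoc, mul_inv_cancel₀ hc.ne']
    rw [this, Filter.map_id]
  calc 𝓝[>] (0 : ℝ) = _ := key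
    _ ≤ Filter.map (fun s : ℝ => c * s) (𝓝[>] (0 : ℝ)) :=
        Filter.map_mono (tendsto_mul_nhdsGT (inv_pos.2 hc))

lemma clarkeDeriv_smul (f : EuclideanSpace ℝ (Fin n) → ℝ) (hf : LocallyLipschitz f)
    (y v : EuclideanSpace ℝ (Fin n)) {c : ℝ} (hc : 0 < c) :
    clarkeDeriv f y (c • v) = c * clarkeDeriv f y v := by
  obtain ⟨K, hK0, hK⟩ := exists_bound f hf y
  set l := ((𝓝 y) ×ˢ (𝓝[>] (0 : ℝ))) with hl
  obtain ⟨hbdd, hbdd'⟩ := isBoundedUnder_of_abs (hK v)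
  have hcob : IsCoboundedUnder (· ≤ ·) l (dq f v) := hbdd'.isCoboundedUnder_le
  set m : EuclideanSpace ℝ (Fin n) × ℝ → EuclideanSpace ℝ (Fin n) × ℝ :=
    fun p => (p.1, c * p.2) with hm
  have hmap : Filter.map m l = l := by
    have h1 : m = Prod.map id (fun s : ℝ => c * s) := rfl
    rw [h1, hl, ← Filter.prod_map_map_eq' id (fun s : ℝ => c * s), Filter.map_id,
      map_mul_nhdsGT hc]
  have key : clarkeDeriv f y (c • v)
      = limsup (((fun r : ℝ => c * r) ∘ dq f v) ∘ m) l := by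
    rw [clarkeDeriv_eq]
    apply Filter.limsup_congr
    filter_upwards [eventually_pos y] with p hp
    show dq f (c • v) p = c * dq f v (p.1, c * p.2)
    have harg : p.2 • (c • v) = (c * p.2) • v := by rw [smul_smul, mul_comm]
    rw [dq, dq, harg]
    show (f (p.1 + (c * p.2) • v) - f p.1) / p.2
        = c * ((f (p.1 + (c * p.2) • v) - f p.1) / (c * p.2))
    have hp2 : p.2 ≠ 0 := hp.ne'
    field_simp
  rw [key]
  have comp : limsup (((fun r : ℝ => c * r) ∘ dq f v) ∘ m) l
      = limsup ((fun r : ℝ => c * r) ∘ dq f v) l := by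
    simp only [Filter.limsup]
    rw [← Filter.map_map, hmap]
  rw [comp]
  exact (Monotone.map_limsup_of_continuousAt
    (f := fun r : ℝ => c * r)
    (fun a b hab => mul_le_mul_of_nonneg_left hab hc.le) (dq f v)
    (continuous_const.mul continuous_id).continuousAt hbdd hcob).symm

lemma clarkeDeriv_add_le (f : EuclideanSpace ℝ (Fin n) → ℝ) (hf : LocallyLipschitz f)
    (y u v : EuclideanSpace ℝ (Fin n)) :
    clarkeDeriv f y (u + v) ≤ clarkeDeriv f y u + clarkeDeriv f y v := by
  obtain ⟨K, hK0, hK⟩ := exists_bound f hf y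
  set l := ((𝓝 y) ×ˢ (𝓝[>] (0 : ℝ))) with hl
  set m : EuclideanSpace ℝ (Fin n) × ℝ → EuclideanSpace ℝ (Fin n) × ℝ :=
    fun p => (p.1 + p.2 • v, p.2) with hm
  have hmt : Filter.Tendsto m l l := by
    rw [hl, Filter.tendsto_prod_iff']
    constructor
    · have h1 : Filter.Tendsto (fun p : EuclideanSpace ℝ (Fin n) × ℝ => p.1) l (𝓝 y) :=
        tendsto_fst
      have h2 : Filter.Tendsto (fun p : EuclideanSpace ℝ (Fin n) × ℝ => p.2) l (𝓝 (0 : ℝ)) :=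
        tendsto_snd.mono_right nhdsWithin_le_nhds
      have := h1.add (h2.smul_const v)
      simpa using this
    · exact tendsto_snd
  have heq : ∀ p : EuclideanSpace ℝ (Fin n) × ℝ, dq f (u + v) p = dq f u (m p) + dq f v p := by
    intro p
    show (f (p.1 + p.2 • (u + v)) - f p.1) / p.2
        = (f (p.1 + p.2 • v + p.2 • u) - f (p.1 + p.2 • v)) / p.2
          + (f (p.1 + p.2 • v) - f p.1) / p.2
    rw [← add_div, sub_add_sub_cancel]
    congr 2
    rw [smul_add]
    abel
  have bu : ∀ᶠ p in l, |dq f u (m p)| ≤ K * ‖u‖ := hmt.eventually (hK u)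
  obtain ⟨A2, A1⟩ := isBoundedUnder_of_abs bu
  obtain ⟨B2, B1⟩ := isBoundedUnder_of_abs (hK v)
  obtain ⟨C2, C1⟩ := isBoundedUnder_of_abs (hK u)
  haveI : (Filter.map m l).NeBot := Filter.map_neBot
  have step1 : clarkeDeriv f y (u + v) = limsup ((dq f u ∘ m) + dq f v) l := by
    rw [clarkeDeriv_eq]
    exact Filter.limsup_congr (Filter.Eventually.of_forall heq)
  have step2 : limsup ((dq f u ∘ m) + dq f v) l
      ≤ limsup (dq f u ∘ m) l + limsup (dq f v) l :=
    limsup_add_le A1 A2 B1.isCoboundedUnder_le B2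
  have step3 : limsup (dq f u ∘ m) l ≤ clarkeDeriv f y u := by
    have e1 : limsup (dq f u ∘ m) l = limsup (dq f u) (Filter.map m l) := by
      simp only [Filter.limsup]
      rw [Filter.map_map]
    have hcob : (Filter.map m l).IsCoboundedUnder (· ≤ ·) (dq f u) := by
      refine IsBoundedUnder.isCoboundedUnder_le ?_
      refine ⟨-(K * ‖u‖), ?_⟩
      show ∀ᶠ x in Filter.map (dq f u) (Filter.map m l), x ≥ -(K * ‖u‖)
      rw [Filter.map_map]
      exact eventually_map.2 (bu.mono fun p hp => (abs_le.1 hp).1)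
    rw [e1, clarkeDeriv_eq]
    exact limsup_le_limsup_of_le hmt hcob C2
  calc clarkeDeriv f y (u + v) = _ := step1
    _ ≤ limsup (dq f u ∘ m) l + limsup (dq f v) l := step2
    _ ≤ clarkeDeriv f y u + clarkeDeriv f y v := by
        rw [clarkeDeriv_eq f y v]
        linarith [step3]

lemma le_clarkeDeriv_of_path (f : EuclideanSpace ℝ (Fin n) → ℝ) (hf : LocallyLipschitz f)
    (y v : EuclideanSpace ℝ (Fin n)) {c : ℝ} (path : ℝ → EuclideanSpace ℝ (Fin n) × ℝ)
    (hpath : Filter.Tendsto path (𝓝[>] (0 : ℝ)) ((𝓝 y) ×ˢ (𝓝[>] (0 : ℝ))))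
    (h : ∀ᶠ s in 𝓝[>] (0 : ℝ), c ≤ dq f v (path s)) :
    c ≤ clarkeDeriv f y v := by
  obtain ⟨K, hK0, hK⟩ := exists_bound f hf y
  obtain ⟨hbdd, _⟩ := isBoundedUnder_of_abs (hK v)
  rw [clarkeDeriv_eq]
  exact le_limsup_of_frequently_le (hpath.frequently h.frequently) hbdd

/-- Hahn-Banach step: from two directional bounds produce an element of the Clarke gradient. -/
lemma exists_mem_clarkeGradient (f : EuclideanSpace ℝ (Fin n) → ℝ) (hf : LocallyLipschitz f)
    (y v : EuclideanSpace ℝ (Fin n)) {c : ℝ}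
    (h1 : c ≤ clarkeDeriv f y v) (h2 : -c ≤ clarkeDeriv f y (-v)) :
    ∃ w ∈ clarkeGradient f y, (inner ℝ w v : ℝ) = c := by
  have N_hom : ∀ a : ℝ, 0 < a → ∀ u, clarkeDeriv f y (a • u) = a * clarkeDeriv f y u :=
    fun a ha u => clarkeDeriv_smul f hf y u ha
  have N_add : ∀ u w, clarkeDeriv f y (u + w) ≤ clarkeDeriv f y u + clarkeDeriv f y w :=
    fun u w => clarkeDeriv_add_le f hf y u w
  have N_zero : clarkeDeriv f y 0 = 0 := clarkeDeriv_zero f y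
  by_cases hv : v = 0
  · -- v = 0: c = 0, just need any element of the gradient
    have hc0 : c = 0 := by
      rw [hv, N_zero] at h1
      rw [hv, neg_zero, N_zero] at h2
      linarith
    have hdom : ∀ u : (⟨⊥, 0⟩ : EuclideanSpace ℝ (Fin n) →ₗ.[ℝ] ℝ).domain,
        (⟨⊥, 0⟩ : EuclideanSpace ℝ (Fin n) →ₗ.[ℝ] ℝ) u ≤ clarkeDeriv f y u := by
      intro u
      have hu : (u : EuclideanSpace ℝ (Fin n)) = 0 := (Submodule.mem_bot ℝ).1 u.2
      have hz : (⟨⊥, 0⟩ : EuclideanSpace ℝ (Fin n) →ₗ.[ℝ] ℝ) u = 0 := rfl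
      rw [hz, hu, N_zero]
    obtain ⟨g, -, hg⟩ := exists_extension_of_le_sublinear
      (⟨⊥, 0⟩ : EuclideanSpace ℝ (Fin n) →ₗ.[ℝ] ℝ) (clarkeDeriv f y) N_hom N_add hdom
    set w := (InnerProductSpace.toDual ℝ (EuclideanSpace ℝ (Fin n))).symm
      (LinearMap.toContinuousLinearMap g) with hw
    have hinner : ∀ u, (inner ℝ w u : ℝ) = g u := fun u =>
      InnerProductSpace.toDual_symm_apply
    refine ⟨w, fun u => ?_, ?_⟩
    · rw [hinner u]; exact hg u
    · rw [hinner v, hv, map_zero, hc0]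
  · -- v ≠ 0
    have hdom : ∀ u : (LinearPMap.mkSpanSingleton (K := ℝ) (σ := RingHom.id ℝ) v c hv).domain,
        (LinearPMap.mkSpanSingleton (K := ℝ) (σ := RingHom.id ℝ) v c hv) u ≤ clarkeDeriv f y u := by
      rintro ⟨uval, hmem⟩
      obtain ⟨a, ha⟩ := Submodule.mem_span_singleton.1 hmem
      subst ha
      have hval : (LinearPMap.mkSpanSingleton (K := ℝ) (σ := RingHom.id ℝ) v c hv) ⟨a • v, hmem⟩ = a * c := by
        have := LinearPMap.mkSpanSingleton'_apply (σ := RingHom.id ℝ) v c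
          (fun b hb => (smul_eq_zero.1 hb).elim (fun h => by rw [h, map_zero, zero_smul])
            (fun h => absurd h hv)) a hmem
        simpa [smul_eq_mul] using this
      rw [hval]
      show a * c ≤ clarkeDeriv f y (a • v)
      rcases lt_trichotomy a 0 with hlt | heq | hgt
      · have hvv : a • v = (-a) • (-v) := by rw [smul_neg, neg_smul, neg_neg]
        rw [hvv, N_hom (-a) (by linarith) (-v)]
        have := mul_le_mul_of_nonneg_left h2 (by linarith : (0:ℝ) ≤ -a)
        nlinarith
      · rw [heq, zero_smul, N_zero, zero_mul]
      · rw [N_hom a hgt v]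
        exact mul_le_mul_of_nonneg_left h1 hgt.le
    obtain ⟨g, hext, hg⟩ := exists_extension_of_le_sublinear
      (LinearPMap.mkSpanSingleton (K := ℝ) (σ := RingHom.id ℝ) v c hv) (clarkeDeriv f y) N_hom N_add hdom
    set w := (InnerProductSpace.toDual ℝ (EuclideanSpace ℝ (Fin n))).symm
      (LinearMap.toContinuousLinearMap g) with hw
    have hinner : ∀ u, (inner ℝ w u : ℝ) = g u := fun u =>
      InnerProductSpace.toDual_symm_apply
    refine ⟨w, fun u => ?_, ?_⟩
    · rw [hinner u]; exact hg u
    · rw [hinner v]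
      have hm : v ∈ (LinearPMap.mkSpanSingleton (K := ℝ) (σ := RingHom.id ℝ) v c hv).domain :=
        Submodule.mem_span_singleton_self v
      exact (hext ⟨v, hm⟩).trans (LinearPMap.mkSpanSingleton_apply ℝ ℝ hv c)

end LebourgAux

open LebourgAux in
/-- Lebourg's mean value theorem. -/
theorem stmt7 {n : ℕ} (f : EuclideanSpace ℝ (Fin n) → ℝ) (hf : LocallyLipschitz f)
    (x x' : EuclideanSpace ℝ (Fin n)) :
    ∃ y ∈ segment ℝ x x', ∃ w ∈ clarkeGradient f y, f x' - f x = (inner ℝ w (x' - x) : ℝ) := by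
  set v := x' - x with hv
  set c := f x' - f x with hc
  set φ : ℝ → ℝ := fun t => f (x + t • v) - t * c with hφ
  have hφc : ContinuousOn φ (Set.Icc (0:ℝ) 1) := by
    apply ContinuousOn.sub
    · exact (hf.continuous.comp (by continuity)).continuousOn
    · exact (continuous_id.mul continuous_const).continuousOn
  have hφ0 : φ 0 = f x := by simp [hφ]
  have hφ1 : φ 1 = f x := by simp [hφ, hv, hc]
  -- there is an interior extremum
  have hext : ∃ t₀ ∈ Set.Ioo (0:ℝ) 1,
      IsMaxOn φ (Set.Icc 0 1) t₀ ∨ IsMinOn φ (Set.Icc 0 1) t₀ := by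
    obtain ⟨ta, hta, htamax⟩ := isCompact_Icc.exists_isMaxOn
      (Set.nonempty_Icc.2 zero_le_one) hφc
    obtain ⟨tb, htb, htbmin⟩ := isCompact_Icc.exists_isMinOn
      (Set.nonempty_Icc.2 zero_le_one) hφc
    by_cases ha : ta ∈ Set.Ioo (0:ℝ) 1
    · exact ⟨ta, ha, Or.inl htamax⟩
    by_cases hb : tb ∈ Set.Ioo (0:ℝ) 1
    · exact ⟨tb, hb, Or.inr htbmin⟩
    -- both extrema at endpoints, so φ is constant
    have hva : φ ta = f x := by
      rcases hta with ⟨h0, h1⟩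
      rcases eq_or_lt_of_le h0 with h | h
      · rw [← h, hφ0]
      rcases eq_or_lt_of_le h1 with h' | h'
      · rw [h', hφ1]
      · exact absurd ⟨h, h'⟩ ha
    have hvb : φ tb = f x := by
      rcases htb with ⟨h0, h1⟩
      rcases eq_or_lt_of_le h0 with h | h
      · rw [← h, hφ0]
      rcases eq_or_lt_of_le h1 with h' | h'
      · rw [h', hφ1]
      · exact absurd ⟨h, h'⟩ hb
    refine ⟨1/2, by norm_num, Or.inl ?_⟩
    intro t ht
    have hmax := htamax ht
    have hmin := htbmin (by norm_num : (1/2 : ℝ) ∈ Set.Icc (0:ℝ) 1)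
    simp only [Set.mem_setOf_eq] at hmax hmin ⊢
    rw [hva] at hmax
    rw [hvb] at hmin
    -- φ t ≤ f x ≤ φ (1/2)
    exact hmax.trans hmin
  obtain ⟨t₀, ⟨ht₀0, ht₀1⟩, hcase⟩ := hext
  set y := x + t₀ • v with hy
  have hyseg : y ∈ segment ℝ x x' := by
    rw [segment_eq_image' ℝ x x']
    exact ⟨t₀, ⟨ht₀0.le, ht₀1.le⟩, rfl⟩
  -- the two key directional bounds
  have hbounds : c ≤ clarkeDeriv f y v ∧ -c ≤ clarkeDeriv f y (-v) := by
    rcases hcase with hmax | hmin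
    · constructor
      · -- path s ↦ (y - s • v, s)
        apply le_clarkeDeriv_of_path f hf y v (fun s => (y - s • v, s))
        · rw [Filter.tendsto_prod_iff']
          constructor
          · have h2 : Filter.Tendsto (fun s : ℝ => s) (𝓝[>] (0:ℝ)) (𝓝 (0:ℝ)) :=
              tendsto_id.mono_right nhdsWithin_le_nhds
            have := (tendsto_const_nhds (x := y) (f := 𝓝[>] (0:ℝ))).sub (h2.smul_const v)
            simpa using this
          · exact tendsto_id
        · filter_upwards [Ioo_mem_nhdsGT_of_mem
            (Set.mem_Ico.2 ⟨le_refl (0:ℝ), ht₀0⟩)] with s hs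
          have hs0 : 0 < s := hs.1
          have hst : s < t₀ := hs.2
          have hmem : t₀ - s ∈ Set.Icc (0:ℝ) 1 := ⟨by linarith, by linarith⟩
          have := hmax hmem
          simp only [Set.mem_setOf_eq, hφ] at this
          have harg : x + (t₀ - s) • v = y - s • v := by
            rw [hy, sub_smul]; abel
          rw [harg] at this
          -- f (y - s•v) - (t₀ - s)*c ≤ f (x + t₀ • v) - t₀ * c
          have hfy : f (x + t₀ • v) = f y := by rw [hy]
          rw [hfy] at this
          show c ≤ (f (y - s • v + s • v) - f (y - s • v)) / s
          have harg2 : y - s • v + s • v = y := by abel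
          rw [harg2, le_div_iff₀ hs0]
          nlinarith
      · -- path s ↦ (y + s • v, s), direction -v
        apply le_clarkeDeriv_of_path f hf y (-v) (fun s => (y + s • v, s))
        · rw [Filter.tendsto_prod_iff']
          constructor
          · have h2 : Filter.Tendsto (fun s : ℝ => s) (𝓝[>] (0:ℝ)) (𝓝 (0:ℝ)) :=
              tendsto_id.mono_right nhdsWithin_le_nhds
            have := (tendsto_const_nhds (x := y) (f := 𝓝[>] (0:ℝ))).add (h2.smul_const v)
            simpa using this
          · exact tendsto_id
        · filter_upwards [Ioo_mem_nhdsGT_of_mem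
            (Set.mem_Ico.2 ⟨le_refl (0:ℝ), show (0:ℝ) < 1 - t₀ by linarith⟩)] with s hs
          have hs0 : 0 < s := hs.1
          have hst : s < 1 - t₀ := hs.2
          have hmem : t₀ + s ∈ Set.Icc (0:ℝ) 1 := ⟨by linarith, by linarith⟩
          have := hmax hmem
          simp only [Set.mem_setOf_eq, hφ] at this
          have harg : x + (t₀ + s) • v = y + s • v := by
            rw [hy, add_smul]; abel
          rw [harg] at this
          have hfy : f (x + t₀ • v) = f y := by rw [hy]
          rw [hfy] at this
          show -c ≤ (f (y + s • v + s • (-v)) - f (y + s • v)) / s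
          have harg2 : y + s • v + s • (-v) = y := by rw [smul_neg]; abel
          rw [harg2, le_div_iff₀ hs0]
          nlinarith
    · constructor
      · -- path s ↦ (y, s)
        apply le_clarkeDeriv_of_path f hf y v (fun s => (y, s))
        · rw [Filter.tendsto_prod_iff']
          exact ⟨tendsto_const_nhds, tendsto_id⟩
        · filter_upwards [Ioo_mem_nhdsGT_of_mem
            (Set.mem_Ico.2 ⟨le_refl (0:ℝ), show (0:ℝ) < 1 - t₀ by linarith⟩)] with s hs
          have hs0 : 0 < s := hs.1
          have hst : s < 1 - t₀ := hs.2
          have hmem : t₀ + s ∈ Set.Icc (0:ℝ) 1 := ⟨by linarith, by linarith⟩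
          have := hmin hmem
          simp only [Set.mem_setOf_eq, hφ] at this
          have harg : x + (t₀ + s) • v = y + s • v := by
            rw [hy, add_smul]; abel
          rw [harg] at this
          have hfy : f (x + t₀ • v) = f y := by rw [hy]
          rw [hfy] at this
          show c ≤ (f (y + s • v) - f y) / s
          rw [le_div_iff₀ hs0]
          nlinarith
      · -- path s ↦ (y, s), direction -v
        apply le_clarkeDeriv_of_path f hf y (-v) (fun s => (y, s))
        · rw [Filter.tendsto_prod_iff']
          exact ⟨tendsto_const_nhds, tendsto_id⟩
        · filter_upwards [Ioo_mem_nhdsGT_of_mem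
            (Set.mem_Ico.2 ⟨le_refl (0:ℝ), ht₀0⟩)] with s hs
          have hs0 : 0 < s := hs.1
          have hst : s < t₀ := hs.2
          have hmem : t₀ - s ∈ Set.Icc (0:ℝ) 1 := ⟨by linarith, by linarith⟩
          have := hmin hmem
          simp only [Set.mem_setOf_eq, hφ] at this
          have harg : x + (t₀ - s) • v = y - s • v := by
            rw [hy, sub_smul]; abel
          rw [harg] at this
          have hfy : f (x + t₀ • v) = f y := by rw [hy]
          rw [hfy] at this
          show -c ≤ (f (y + s • (-v)) - f y) / s
          have harg2 : y + s • (-v) = y - s • v := by rw [smul_neg]; abel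
          rw [harg2, le_div_iff₀ hs0]
          nlinarith
  obtain ⟨hb1, hb2⟩ := hbounds
  obtain ⟨w, hwg, hwc⟩ := exists_mem_clarkeGradient f hf y v hb1 hb2
  exact ⟨y, hyseg, w, hwg, hwc.symm⟩
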